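/- Fix Λ, d, d_j > 0, τ_jβ_j > 0 for all j ∈ J, and θ ∈ (0,1), and assume max(T_s, T_m, (1−θ)T_p, (1−θ)T_{m.p}) ≠ 1. Let J⁰ be the 4×4 block upper-triangular matrix [[B₀G−D, B₀L_p],[0, B₀(G_p−L_p)−D_p]], the linearization of the bacterial equations at the bacteria-free stationary state E⁰ = (B₀,0,0,0,0). Then there exists ε₀ > 0 such that whenever all mutation ratios ε_s, ε_m, ε_p, ε_{m.p} lie in (0, ε₀): (a) if max(T_s, T_m, (1−θ)T_p, (1−θ)T_{m.p}) < 1 (equivalently R* = max_j R_j < 1 for such small ratios), then every eigenvalue of J⁰ has negative real part, so E⁰ is locally asymptotically stable; (b) if max(T_s, T_m, (1−θ)T_p, (1−θ)T_{m.p}) > 1 (equivalently R* > 1), then J⁰ has an eigenvalue with positive real part, so E⁰ is unstable. -/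

import Mathlib

open Filter Set Matrix

/-- The linearization `J⁰ = [[B₀G−D, B₀L_p],[0, B₀(G_p−L_p)−D_p]]` of the bacterial
equations at the bacteria-free stationary state `E⁰ = (B₀,0,0,0,0)`. -/
noncomputable def J0 (B0 ds dm dp dmp bs bm bp bmp ts tm tp tmp es em ep emp th : ℝ) :
    Matrix (Fin 4) (Fin 4) ℝ :=
  !![B0 * (ts * bs * (1 - es)) - ds, B0 * (em * tm * bm), B0 * (th * tp * bp), 0;
     B0 * (es * ts * bs), B0 * (tm * bm * (1 - em)) - dm, 0, B0 * (th * tmp * bmp);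
     0, 0, B0 * (tp * bp * (1 - ep * (1 - th)) - th * tp * bp) - dp,
       B0 * (emp * (1 - th) * tmp * bmp);
     0, 0, B0 * (ep * (1 - th) * tp * bp),
       B0 * (tmp * bmp * (1 - emp * (1 - th)) - th * tmp * bmp) - dmp]

lemma quad_root_re_neg (p q : ℝ) (hp : 0 < p) (hq : 0 < q) (z : ℂ)
    (hz : z^2 + (p:ℂ)*z + (q:ℂ) = 0) : z.re < 0 := by
  have h1 : z.re^2 - z.im^2 + p*z.re + q = 0 := by
    have := congrArg Complex.re hz
    simp [Complex.add_re, Complex.mul_re, pow_two, Complex.mul_im] at this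
    linarith
  have h2 : z.im*(2*z.re + p) = 0 := by
    have := congrArg Complex.im hz
    simp [Complex.add_im, Complex.mul_im, pow_two, Complex.mul_re] at this
    linarith
  by_contra h
  push_neg at h
  rcases mul_eq_zero.mp h2 with hy | hx
  · nlinarith
  · nlinarith

lemma block_stable (α δ b c : ℝ) (hα : α < 0) (hδ : δ < 0) (hq : b*c < α*δ) (z : ℂ)
    (hz : (z - α)*(z - δ) - (b:ℂ)*(c:ℂ) = 0) : z.re < 0 := by
  apply quad_root_re_neg (-(α+δ)) (α*δ - b*c) (by linarith) (by nlinarith) z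
  push_cast
  linear_combination hz

lemma block_unstable (α δ b c : ℝ) (hbc : 0 < b*c) (hα : 0 < α ∨ 0 < δ) :
    ∃ r : ℝ, 0 < r ∧ ((r:ℂ) - α)*((r:ℂ) - δ) - (b:ℂ)*(c:ℂ) = 0 := by
  have hs0 : 0 < ((α - δ)/2)^2 + b*c := by nlinarith [sq_nonneg ((α-δ)/2)]
  have hsq : Real.sqrt (((α - δ)/2)^2 + b*c) ^ 2 = ((α - δ)/2)^2 + b*c := Real.sq_sqrt hs0.le
  have habs : |(α - δ)/2| ≤ Real.sqrt (((α - δ)/2)^2 + b*c) := by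
    rw [← Real.sqrt_sq_eq_abs]
    exact Real.sqrt_le_sqrt (by nlinarith)
  refine ⟨(α+δ)/2 + Real.sqrt (((α - δ)/2)^2 + b*c), ?_, ?_⟩
  · rcases hα with h | h
    · have h1 := le_abs_self ((α-δ)/2)
      linarith
    · have h1 := neg_abs_le ((α-δ)/2)
      linarith
  · have hr : ((α+δ)/2 + Real.sqrt (((α - δ)/2)^2 + b*c) - α)
        *((α+δ)/2 + Real.sqrt (((α - δ)/2)^2 + b*c) - δ) - b*c = 0 := by
      linear_combination hsq
    exact_mod_cast hr

lemma mem_spec_iff' (M : Matrix (Fin 4) (Fin 4) ℂ) (z : ℂ) :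
    z ∈ spectrum ℂ M ↔ (z • (1 : Matrix (Fin 4) (Fin 4) ℂ) - M).det = 0 := by
  rw [spectrum.mem_iff, Matrix.isUnit_iff_isUnit_det, isUnit_iff_ne_zero, not_ne_iff,
    Algebra.algebraMap_eq_smul_one]

lemma det_block_tri (a b u v c e w x f g h k z : ℂ) :
    (z • (1 : Matrix (Fin 4) (Fin 4) ℂ) - !![a,b,u,v;c,e,w,x;0,0,f,g;0,0,h,k]).det
      = ((z-a)*(z-e)-b*c)*((z-f)*(z-k)-g*h) := by
  have hm : z • (1 : Matrix (Fin 4) (Fin 4) ℂ) - !![a,b,u,v;c,e,w,x;0,0,f,g;0,0,h,k]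
      = !![z-a,-b,-u,-v;-c,z-e,-w,-x;0,0,z-f,-g;0,0,-h,z-k] := by
    ext i j
    fin_cases i <;> fin_cases j <;>
      simp [Matrix.one_apply, Matrix.vecHead, Matrix.vecTail]
  rw [hm]
  simp [Matrix.det_succ_row_zero, Fin.sum_univ_succ, Matrix.vecHead, Matrix.vecTail,
    Fin.succAbove]
  ring

lemma J0_map (B0 ds dm dp dmp bs bm bp bmp ts tm tp tmp es em ep emp th : ℝ) :
    (J0 B0 ds dm dp dmp bs bm bp bmp ts tm tp tmp es em ep emp th).map Complex.ofReal
    = !![((B0 * (ts * bs * (1 - es)) - ds : ℝ) : ℂ), ((B0 * (em * tm * bm) : ℝ) : ℂ),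
          ((B0 * (th * tp * bp) : ℝ) : ℂ), 0;
        ((B0 * (es * ts * bs) : ℝ) : ℂ), ((B0 * (tm * bm * (1 - em)) - dm : ℝ) : ℂ), 0,
          ((B0 * (th * tmp * bmp) : ℝ) : ℂ);
        0, 0, ((B0 * (tp * bp * (1 - ep * (1 - th)) - th * tp * bp) - dp : ℝ) : ℂ),
          ((B0 * (emp * (1 - th) * tmp * bmp) : ℝ) : ℂ);
        0, 0, ((B0 * (ep * (1 - th) * tp * bp) : ℝ) : ℂ),
          ((B0 * (tmp * bmp * (1 - emp * (1 - th)) - th * tmp * bmp) - dmp : ℝ) : ℂ)] := by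
  ext i j
  fin_cases i <;> fin_cases j <;>
    simp [J0, Matrix.map_apply, Matrix.vecHead, Matrix.vecTail]

set_option maxHeartbeats 1000000 in
theorem E0_stability_threshold
    (Lam d ds dm dp dmp bs bm bp bmp ts tm tp tmp th : ℝ)
    (hLam : 0 < Lam) (hd : 0 < d)
    (hds : 0 < ds) (hdm : 0 < dm) (hdp : 0 < dp) (hdmp : 0 < dmp)
    (hs : 0 < ts * bs) (hm : 0 < tm * bm) (hpp : 0 < tp * bp) (hmp : 0 < tmp * bmp)
    (hth : th ∈ Set.Ioo (0:ℝ) 1)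
    (B0 Ts Tm Tp Tmp : ℝ) (hB0 : B0 = Lam / d)
    (hTs : Ts = B0 * ts * bs / ds) (hTm : Tm = B0 * tm * bm / dm)
    (hTp : Tp = B0 * tp * bp / dp) (hTmp : Tmp = B0 * tmp * bmp / dmp)
    (hne : max (max Ts Tm) (max ((1 - th) * Tp) ((1 - th) * Tmp)) ≠ 1) :
    ∃ ε₀ : ℝ, 0 < ε₀ ∧
      ∀ es em ep emp : ℝ,
        es ∈ Set.Ioo 0 ε₀ → em ∈ Set.Ioo 0 ε₀ → ep ∈ Set.Ioo 0 ε₀ → emp ∈ Set.Ioo 0 ε₀ →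
        ((max (max Ts Tm) (max ((1 - th) * Tp) ((1 - th) * Tmp)) < 1 →
            ∀ z ∈ spectrum ℂ
              ((J0 B0 ds dm dp dmp bs bm bp bmp ts tm tp tmp es em ep emp th).map
                Complex.ofReal), z.re < 0) ∧
         (1 < max (max Ts Tm) (max ((1 - th) * Tp) ((1 - th) * Tmp)) →
            ∃ z ∈ spectrum ℂ
              ((J0 B0 ds dm dp dmp bs bm bp bmp ts tm tp tmp es em ep emp th).map
                Complex.ofReal), 0 < z.re)) := by
  have hB0pos : 0 < B0 := hB0 ▸ div_pos hLam hd
  have h1th : 0 < 1 - th := by linarith [hth.2]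
  -- spectrum characterization
  have hspec : ∀ es em ep emp : ℝ, ∀ z : ℂ,
      z ∈ spectrum ℂ ((J0 B0 ds dm dp dmp bs bm bp bmp ts tm tp tmp es em ep emp th).map
        Complex.ofReal) ↔
      ((z - ((B0 * (ts * bs * (1 - es)) - ds : ℝ) : ℂ))
          * (z - ((B0 * (tm * bm * (1 - em)) - dm : ℝ) : ℂ))
        - ((B0 * (em * tm * bm) : ℝ) : ℂ) * ((B0 * (es * ts * bs) : ℝ) : ℂ) = 0) ∨
      ((z - ((B0 * (tp * bp * (1 - ep * (1 - th)) - th * tp * bp) - dp : ℝ) : ℂ))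
          * (z - ((B0 * (tmp * bmp * (1 - emp * (1 - th)) - th * tmp * bmp) - dmp : ℝ) : ℂ))
        - ((B0 * (emp * (1 - th) * tmp * bmp) : ℝ) : ℂ) * ((B0 * (ep * (1 - th) * tp * bp) : ℝ) : ℂ)
          = 0) := by
    intro es em ep emp z
    rw [mem_spec_iff', J0_map, det_block_tri, mul_eq_zero]
  rcases lt_or_gt_of_ne hne with hlt | hgt
  · -- stable case: any ε₀ works, take 1
    have hTs1 : Ts < 1 := lt_of_le_of_lt (le_trans (le_max_left _ _) (le_max_left _ _)) hlt
    have hTm1 : Tm < 1 := lt_of_le_of_lt (le_trans (le_max_right _ _) (le_max_left _ _)) hlt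
    have hTp1 : (1 - th) * Tp < 1 :=
      lt_of_le_of_lt (le_trans (le_max_left _ _) (le_max_right _ _)) hlt
    have hTmp1 : (1 - th) * Tmp < 1 :=
      lt_of_le_of_lt (le_trans (le_max_right _ _) (le_max_right _ _)) hlt
    have ha : B0 * (ts * bs) < ds := by
      have h1 : B0 * ts * bs / ds < 1 := hTs ▸ hTs1
      have := (div_lt_one hds).mp h1
      linarith [mul_assoc B0 ts bs]
    have he : B0 * (tm * bm) < dm := by
      have h1 : B0 * tm * bm / dm < 1 := hTm ▸ hTm1
      have := (div_lt_one hdm).mp h1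
      linarith [mul_assoc B0 tm bm]
    have hap : (1 - th) * (B0 * (tp * bp)) < dp := by
      have h1 : (1 - th) * (B0 * tp * bp / dp) < 1 := hTp ▸ hTp1
      have h2 : ((1 - th) * (B0 * (tp * bp))) / dp < 1 := by
        rw [show ((1 - th) * (B0 * (tp * bp))) / dp = (1 - th) * (B0 * tp * bp / dp) by ring]
        exact h1
      exact (div_lt_one hdp).mp h2
    have hep' : (1 - th) * (B0 * (tmp * bmp)) < dmp := by
      have h1 : (1 - th) * (B0 * tmp * bmp / dmp) < 1 := hTmp ▸ hTmp1
      have h2 : ((1 - th) * (B0 * (tmp * bmp))) / dmp < 1 := by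
        rw [show ((1 - th) * (B0 * (tmp * bmp))) / dmp
            = (1 - th) * (B0 * tmp * bmp / dmp) by ring]
        exact h1
      exact (div_lt_one hdmp).mp h2
    refine ⟨1, one_pos, ?_⟩
    intro es em ep emp hes hem hepp hemp
    constructor
    · intro _ z hz
      rcases (hspec es em ep emp z).mp hz with h | h
      · refine block_stable _ _ _ _ ?_ ?_ ?_ z h
        · nlinarith [mul_pos (mul_pos hB0pos hs) hes.1]
        · nlinarith [mul_pos (mul_pos hB0pos hm) hem.1]
        · have key : (B0 * (ts * bs * (1 - es)) - ds) * (B0 * (tm * bm * (1 - em)) - dm)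
              - (B0 * (em * tm * bm)) * (B0 * (es * ts * bs))
              = (ds - B0 * (ts * bs)) * (dm - B0 * (tm * bm))
                + (ds - B0 * (ts * bs)) * (B0 * (tm * bm)) * em
                + (dm - B0 * (tm * bm)) * (B0 * (ts * bs)) * es := by ring
          nlinarith [mul_pos (sub_pos.mpr ha) (sub_pos.mpr he),
            mul_pos (mul_pos (sub_pos.mpr ha) (mul_pos hB0pos hm)) hem.1,
            mul_pos (mul_pos (sub_pos.mpr he) (mul_pos hB0pos hs)) hes.1]
      · refine block_stable _ _ _ _ ?_ ?_ ?_ z h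
        · nlinarith [mul_pos (mul_pos (mul_pos hB0pos hpp) h1th) hepp.1]
        · nlinarith [mul_pos (mul_pos (mul_pos hB0pos hmp) h1th) hemp.1]
        · have key : (B0 * (tp * bp * (1 - ep * (1 - th)) - th * tp * bp) - dp)
              * (B0 * (tmp * bmp * (1 - emp * (1 - th)) - th * tmp * bmp) - dmp)
              - (B0 * (emp * (1 - th) * tmp * bmp)) * (B0 * (ep * (1 - th) * tp * bp))
              = (dp - (1 - th) * (B0 * (tp * bp))) * (dmp - (1 - th) * (B0 * (tmp * bmp)))
                + (dp - (1 - th) * (B0 * (tp * bp))) * ((1 - th) * (B0 * (tmp * bmp))) * emp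
                + (dmp - (1 - th) * (B0 * (tmp * bmp))) * ((1 - th) * (B0 * (tp * bp))) * ep := by
            ring
          linarith [mul_pos (sub_pos.mpr hap) (sub_pos.mpr hep'),
            mul_pos (mul_pos (sub_pos.mpr hap) (mul_pos h1th (mul_pos hB0pos hmp))) hemp.1,
            mul_pos (mul_pos (sub_pos.mpr hep') (mul_pos h1th (mul_pos hB0pos hpp))) hepp.1]
    · intro h
      exact (lt_asymm hlt h).elim
  · -- unstable case
    rcases lt_max_iff.mp hgt with h4 | h4
    · rcases lt_max_iff.mp h4 with hT | hT
      · -- 1 < Ts : block 1, left diagonal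
        have hC1 : 0 < B0 * (ts * bs) := mul_pos hB0pos hs
        have hdlt : ds < B0 * (ts * bs) := by
          have h1 : 1 < B0 * ts * bs / ds := hTs ▸ hT
          have := (one_lt_div hds).mp h1
          linarith [mul_assoc B0 ts bs]
        refine ⟨1 - ds / (B0 * (ts * bs)), by
          have := (div_lt_one hC1).mpr hdlt; linarith, ?_⟩
        intro es em ep emp hes hem hepp hemp
        refine ⟨fun h => (lt_asymm hgt h).elim, fun _ => ?_⟩
        have hα : 0 < B0 * (ts * bs * (1 - es)) - ds := by
          have h' : ds / (B0 * (ts * bs)) < 1 - es := by linarith [hes.2]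
          have := (div_lt_iff₀ hC1).mp h'
          nlinarith [this]
        have hbc : 0 < B0 * (em * tm * bm) * (B0 * (es * ts * bs)) := by
          nlinarith [mul_pos (mul_pos (mul_pos hB0pos hem.1) hm)
            (mul_pos (mul_pos hB0pos hes.1) hs)]
        obtain ⟨r, hr, hroot⟩ := block_unstable (B0 * (ts * bs * (1 - es)) - ds)
          (B0 * (tm * bm * (1 - em)) - dm) (B0 * (em * tm * bm)) (B0 * (es * ts * bs))
          hbc (Or.inl hα)
        exact ⟨(r : ℂ), (hspec es em ep emp r).mpr (Or.inl hroot), by simpa using hr⟩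
      · -- 1 < Tm : block 1, right diagonal
        have hC2 : 0 < B0 * (tm * bm) := mul_pos hB0pos hm
        have hdlt : dm < B0 * (tm * bm) := by
          have h1 : 1 < B0 * tm * bm / dm := hTm ▸ hT
          have := (one_lt_div hdm).mp h1
          linarith [mul_assoc B0 tm bm]
        refine ⟨1 - dm / (B0 * (tm * bm)), by
          have := (div_lt_one hC2).mpr hdlt; linarith, ?_⟩
        intro es em ep emp hes hem hepp hemp
        refine ⟨fun h => (lt_asymm hgt h).elim, fun _ => ?_⟩
        have hδ : 0 < B0 * (tm * bm * (1 - em)) - dm := by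
          have h' : dm / (B0 * (tm * bm)) < 1 - em := by linarith [hem.2]
          have := (div_lt_iff₀ hC2).mp h'
          nlinarith
        have hbc : 0 < B0 * (em * tm * bm) * (B0 * (es * ts * bs)) := by
          nlinarith [mul_pos (mul_pos (mul_pos hB0pos hem.1) hm)
            (mul_pos (mul_pos hB0pos hes.1) hs)]
        obtain ⟨r, hr, hroot⟩ := block_unstable (B0 * (ts * bs * (1 - es)) - ds)
          (B0 * (tm * bm * (1 - em)) - dm) (B0 * (em * tm * bm)) (B0 * (es * ts * bs))
          hbc (Or.inr hδ)
        exact ⟨(r : ℂ), (hspec es em ep emp r).mpr (Or.inl hroot), by simpa using hr⟩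
    · rcases lt_max_iff.mp h4 with hT | hT
      · -- 1 < (1-th)*Tp : block 2, left diagonal
        have hCp : 0 < (1 - th) * (B0 * (tp * bp)) := mul_pos h1th (mul_pos hB0pos hpp)
        have hdlt : dp < (1 - th) * (B0 * (tp * bp)) := by
          have h1 : 1 < (1 - th) * (B0 * tp * bp / dp) := hTp ▸ hT
          have h2 : 1 < ((1 - th) * (B0 * (tp * bp))) / dp := by
            rw [show ((1 - th) * (B0 * (tp * bp))) / dp
                = (1 - th) * (B0 * tp * bp / dp) by ring]
            exact h1
          exact (one_lt_div hdp).mp h2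
        refine ⟨1 - dp / ((1 - th) * (B0 * (tp * bp))), by
          have := (div_lt_one hCp).mpr hdlt; linarith, ?_⟩
        intro es em ep emp hes hem hepp hemp
        refine ⟨fun h => (lt_asymm hgt h).elim, fun _ => ?_⟩
        have hα : 0 < B0 * (tp * bp * (1 - ep * (1 - th)) - th * tp * bp) - dp := by
          have h' : dp / ((1 - th) * (B0 * (tp * bp))) < 1 - ep := by linarith [hepp.2]
          have := (div_lt_iff₀ hCp).mp h'
          nlinarith
        have hbc : 0 < B0 * (emp * (1 - th) * tmp * bmp) * (B0 * (ep * (1 - th) * tp * bp)) := by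
          nlinarith [mul_pos (mul_pos (mul_pos (mul_pos hB0pos hemp.1) h1th) hmp)
            (mul_pos (mul_pos (mul_pos hB0pos hepp.1) h1th) hpp)]
        obtain ⟨r, hr, hroot⟩ := block_unstable
          (B0 * (tp * bp * (1 - ep * (1 - th)) - th * tp * bp) - dp)
          (B0 * (tmp * bmp * (1 - emp * (1 - th)) - th * tmp * bmp) - dmp)
          (B0 * (emp * (1 - th) * tmp * bmp)) (B0 * (ep * (1 - th) * tp * bp))
          hbc (Or.inl hα)
        exact ⟨(r : ℂ), (hspec es em ep emp r).mpr (Or.inr hroot), by simpa using hr⟩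
      · -- 1 < (1-th)*Tmp : block 2, right diagonal
        have hCmp : 0 < (1 - th) * (B0 * (tmp * bmp)) := mul_pos h1th (mul_pos hB0pos hmp)
        have hdlt : dmp < (1 - th) * (B0 * (tmp * bmp)) := by
          have h1 : 1 < (1 - th) * (B0 * tmp * bmp / dmp) := hTmp ▸ hT
          have h2 : 1 < ((1 - th) * (B0 * (tmp * bmp))) / dmp := by
            rw [show ((1 - th) * (B0 * (tmp * bmp))) / dmp
                = (1 - th) * (B0 * tmp * bmp / dmp) by ring]
            exact h1
          exact (one_lt_div hdmp).mp h2
        refine ⟨1 - dmp / ((1 - th) * (B0 * (tmp * bmp))), by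
          have := (div_lt_one hCmp).mpr hdlt; linarith, ?_⟩
        intro es em ep emp hes hem hepp hemp
        refine ⟨fun h => (lt_asymm hgt h).elim, fun _ => ?_⟩
        have hδ : 0 < B0 * (tmp * bmp * (1 - emp * (1 - th)) - th * tmp * bmp) - dmp := by
          have h' : dmp / ((1 - th) * (B0 * (tmp * bmp))) < 1 - emp := by linarith [hemp.2]
          have := (div_lt_iff₀ hCmp).mp h'
          nlinarith
        have hbc : 0 < B0 * (emp * (1 - th) * tmp * bmp) * (B0 * (ep * (1 - th) * tp * bp)) := by
          nlinarith [mul_pos (mul_pos (mul_pos (mul_pos hB0pos hemp.1) h1th) hmp)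
            (mul_pos (mul_pos (mul_pos hB0pos hepp.1) h1th) hpp)]
        obtain ⟨r, hr, hroot⟩ := block_unstable
          (B0 * (tp * bp * (1 - ep * (1 - th)) - th * tp * bp) - dp)
          (B0 * (tmp * bmp * (1 - emp * (1 - th)) - th * tmp * bmp) - dmp)
          (B0 * (emp * (1 - th) * tmp * bmp)) (B0 * (ep * (1 - th) * tp * bp))
          hbc (Or.inr hδ)
        exact ⟨(r : ℂ), (hspec es em ep emp r).mpr (Or.inr hroot), by simpa using hr⟩
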